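/- Let f : ℝⁿ → ℝ have L-Lipschitz gradient and let x, y ∈ ℝⁿ. Then f(y) - f(x) ≤ ∇f(x)ᵀ(y - x) + (L/2)‖y - x‖². In particular, for x ≥ 0, p ∈ ℝⁿ, x(α) = P(x - αp) (componentwise projection onto the nonnegative orthant), and index sets I⁺, I⁻ partitioning {1,…,n}, if (i) Σ_{i∈I⁻}(x(α)ⁱ - xⁱ)² ≤ α²λ_max Σ_{i∈I⁻} gⁱpⁱ, (ii) Σ_{i∈I⁻} gⁱ(x(α)ⁱ - xⁱ) ≤ -α Σ_{i∈I⁻} gⁱpⁱ, and (iii) Σ_{i∈I⁺}(x(α)ⁱ - xⁱ)² ≤ αλ_max Σ_{i∈I⁺} gⁱ(xⁱ - x(α)ⁱ), where g = ∇f(x), then f(x(α)) - f(x) ≤ (α²λ_maxL/2 - α)Σ_{i∈I⁻} gⁱpⁱ + (αλ_maxL/2 - 1)Σ_{i∈I⁺} gⁱ(xⁱ - x(α)ⁱ). -/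

import Mathlib

lemma fderiv_eq_sum' (n : ℕ) (f : (Fin n → ℝ) → ℝ)
    (u w : Fin n → ℝ) :
    fderiv ℝ f u w = ∑ i, fderiv ℝ f u (Pi.single i 1) * w i := by
  have hw : w = ∑ i, (w i) • (Pi.single i (1:ℝ) : Fin n → ℝ) := by
    funext j
    simp [Finset.sum_apply, Pi.single_apply]
  conv_lhs => rw [hw]
  rw [map_sum]
  simp [mul_comm]

lemma cs' (n : ℕ) (a b : Fin n → ℝ) :
    ∑ i, a i * b i ≤ Real.sqrt (∑ i, a i ^ 2) * Real.sqrt (∑ i, b i ^ 2) := by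
  have h := Finset.sum_mul_sq_le_sq_mul_sq Finset.univ a b
  refine (le_abs_self _).trans ?_
  rw [← Real.sqrt_sq_eq_abs, ← Real.sqrt_mul (by positivity)]
  exact Real.sqrt_le_sqrt h

lemma descent' (n : ℕ) (f : (Fin n → ℝ) → ℝ) (hf : Differentiable ℝ f) (L : ℝ) (hL : 0 < L)
    (hlip : ∀ u v : Fin n → ℝ,
      Real.sqrt (∑ i, (fderiv ℝ f u (Pi.single i 1) - fderiv ℝ f v (Pi.single i 1)) ^ 2)
        ≤ L * Real.sqrt (∑ i, (u i - v i) ^ 2))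
    (u v : Fin n → ℝ) :
    f v - f u ≤ ∑ i, fderiv ℝ f u (Pi.single i 1) * (v i - u i)
      + L / 2 * ∑ i, (v i - u i) ^ 2 := by
  set w : Fin n → ℝ := fun i => v i - u i with hw
  set E : ℝ := ∑ i, w i ^ 2 with hE
  have hE0 : 0 ≤ E := by positivity
  set D : ℝ := fderiv ℝ f u w with hD
  set φ : ℝ → ℝ := fun t => f (u + t • w) with hφdef
  have hγ : ∀ t : ℝ, HasDerivAt (fun s : ℝ => u + s • w) w t := by
    intro t
    have h1 : HasDerivAt (fun s : ℝ => s • w) ((1:ℝ) • w) t :=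
      (hasDerivAt_id t).smul_const w
    simpa using h1.const_add u
  have hφ : ∀ t : ℝ, HasDerivAt φ (fderiv ℝ f (u + t • w) w) t := by
    intro t
    exact ((hf (u + t • w)).hasFDerivAt).comp_hasDerivAt t (hγ t)
  set ψ : ℝ → ℝ := fun t => φ t - t * D - L / 2 * t ^ 2 * E with hψdef
  have hψ : ∀ t : ℝ, HasDerivAt ψ (fderiv ℝ f (u + t • w) w - D - L * t * E) t := by
    intro t
    have h1 : HasDerivAt (fun s : ℝ => s * D) D t := by
      simpa using (hasDerivAt_id t).mul_const D
    have h2 : HasDerivAt (fun s : ℝ => L / 2 * s ^ 2 * E) (L * t * E) t := by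
      have := ((hasDerivAt_pow 2 t).const_mul (L / 2)).mul_const E
      exact this.congr_deriv (by rw [show (2:ℕ) - 1 = 1 from rfl]; push_cast; ring)
    exact ((hφ t).sub h1).sub h2
  -- derivative bound
  have hbound : ∀ t : ℝ, 0 ≤ t → fderiv ℝ f (u + t • w) w - D ≤ L * t * E := by
    intro t ht
    have e1 : fderiv ℝ f (u + t • w) w - D
        = ∑ i, (fderiv ℝ f (u + t • w) (Pi.single i 1) - fderiv ℝ f u (Pi.single i 1)) * w i := by
      rw [hD, fderiv_eq_sum' n f (u + t • w) w, fderiv_eq_sum' n f u w]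
      rw [← Finset.sum_sub_distrib]
      congr 1; funext i; ring
    rw [e1]
    have e2 := cs' n (fun i => fderiv ℝ f (u + t • w) (Pi.single i 1) - fderiv ℝ f u (Pi.single i 1)) w
    refine e2.trans ?_
    have e3 := hlip (u + t • w) u
    have e4 : ∑ i, ((u + t • w) i - u i) ^ 2 = t ^ 2 * E := by
      rw [hE, Finset.mul_sum]
      congr 1; funext i; simp; ring
    rw [e4] at e3
    have e5 : Real.sqrt (t ^ 2 * E) = t * Real.sqrt E := by
      rw [Real.sqrt_mul (by positivity), Real.sqrt_sq ht]
    rw [e5] at e3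
    calc Real.sqrt (∑ i, (fderiv ℝ f (u + t • w) (Pi.single i 1) - fderiv ℝ f u (Pi.single i 1)) ^ 2) * Real.sqrt (∑ i, w i ^ 2)
        ≤ L * (t * Real.sqrt E) * Real.sqrt E := by
          apply mul_le_mul_of_nonneg_right e3 (Real.sqrt_nonneg _)
      _ = L * t * (Real.sqrt E * Real.sqrt E) := by ring
      _ = L * t * E := by rw [Real.mul_self_sqrt hE0]
  -- antitone
  have hanti : AntitoneOn ψ (Set.Icc (0:ℝ) 1) := by
    apply antitoneOn_of_deriv_nonpos (convex_Icc 0 1)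
    · exact fun t _ => ((hψ t).continuousAt.continuousWithinAt)
    · intro t ht
      exact ((hψ t).differentiableAt).differentiableWithinAt
    · intro t ht
      rw [interior_Icc] at ht
      rw [(hψ t).deriv]
      have := hbound t ht.1.le
      linarith
  have := hanti (Set.left_mem_Icc.mpr zero_le_one) (Set.right_mem_Icc.mpr zero_le_one) zero_le_one
  have hψ1 : ψ 1 = f v - D - L / 2 * E := by
    simp only [hψdef, hφdef]
    have : u + (1:ℝ) • w = v := by funext i; simp [hw]
    rw [this]; ring
  have hψ0 : ψ 0 = f u := by simp [hψdef, hφdef]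
  rw [hψ1, hψ0] at this
  have hDsum : D = ∑ i, fderiv ℝ f u (Pi.single i 1) * (v i - u i) :=
    fderiv_eq_sum' n f u w
  rw [← hDsum]
  have : f v - f u ≤ D + L / 2 * E := by linarith
  simpa [hE, hw] using this

/-- descent lemma and the resulting bound on f(x(α)) - f(x). -/
theorem stmt_8 (n : ℕ) (f : (Fin n → ℝ) → ℝ) (hf : Differentiable ℝ f)
    (gradf : (Fin n → ℝ) → Fin n → ℝ)
    (hgrad : ∀ x i, gradf x i = fderiv ℝ f x (Pi.single i 1))
    (L : ℝ) (hL : 0 < L)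
    (hlip : ∀ u v : Fin n → ℝ,
      Real.sqrt (∑ i, (gradf u i - gradf v i) ^ 2) ≤ L * Real.sqrt (∑ i, (u i - v i) ^ 2))
    (x : Fin n → ℝ) (hx : ∀ i, 0 ≤ x i)
    (p : Fin n → ℝ) (α : ℝ) (hα : 0 ≤ α) (lmax : ℝ) (hlmax : 0 < lmax)
    (Iplus : Finset (Fin n))
    (g : Fin n → ℝ) (hg : g = gradf x)
    (xα : Fin n → ℝ) (hxα : xα = fun i => max (x i - α * p i) 0)
    (h1 : ∑ i ∈ Iplusᶜ, (xα i - x i) ^ 2 ≤ α ^ 2 * lmax * ∑ i ∈ Iplusᶜ, g i * p i)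
    (h2 : ∑ i ∈ Iplusᶜ, g i * (xα i - x i) ≤ -α * ∑ i ∈ Iplusᶜ, g i * p i)
    (h3 : ∑ i ∈ Iplus, (xα i - x i) ^ 2 ≤ α * lmax * ∑ i ∈ Iplus, g i * (x i - xα i)) :
    (∀ u v : Fin n → ℝ,
      f v - f u ≤ ∑ i, gradf u i * (v i - u i) + L / 2 * ∑ i, (v i - u i) ^ 2) ∧
    f xα - f x ≤ (α ^ 2 * lmax * L / 2 - α) * ∑ i ∈ Iplusᶜ, g i * p i
      + (α * lmax * L / 2 - 1) * ∑ i ∈ Iplus, g i * (x i - xα i) := by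
  have hlip' : ∀ u v : Fin n → ℝ,
      Real.sqrt (∑ i, (fderiv ℝ f u (Pi.single i 1) - fderiv ℝ f v (Pi.single i 1)) ^ 2)
        ≤ L * Real.sqrt (∑ i, (u i - v i) ^ 2) := by
    intro u v
    have := hlip u v
    simpa [hgrad] using this
  have main : ∀ u v : Fin n → ℝ,
      f v - f u ≤ ∑ i, gradf u i * (v i - u i) + L / 2 * ∑ i, (v i - u i) ^ 2 := by
    intro u v
    have := descent' n f hf L hL hlip' u v
    simpa [hgrad] using this
  refine ⟨main, ?_⟩
  have key := main x xα
  rw [← hg] at key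
  rw [← Finset.sum_add_sum_compl Iplus (fun i => g i * (xα i - x i)),
      ← Finset.sum_add_sum_compl Iplus (fun i => (xα i - x i) ^ 2)] at key
  have e1 : ∑ i ∈ Iplus, g i * (xα i - x i) = -∑ i ∈ Iplus, g i * (x i - xα i) := by
    rw [← Finset.sum_neg_distrib]
    congr 1; funext i; ring
  rw [e1] at key
  nlinarith [key, h1, h2, h3, hL.le]
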